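/- (Support of the average state) The range of the linear map associated with ρμ (i.e. LinearMap.range of Matrix.toEuclideanLin ρμ) equals the linear span of {v g : g ∈ G}. (Here the Haar measure has full support and g ↦ v g is continuous.) -/

import Mathlib

open MeasureTheory
open scoped Kronecker Matrix ComplexOrder

noncomputable section

namespace GroupEstimation

variable {G : Type} [Group G] [TopologicalSpace G] [IsTopologicalGroup G]
  [CompactSpace G] [T2Space G] [MeasurableSpace G] [BorelSpace G]

/-- Vectorization of a square matrix. -/
def vec {d : ℕ} (A : Matrix (Fin d) (Fin d) ℂ) : EuclideanSpace ℂ (Fin d × Fin d) :=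
  WithLp.toLp 2 (fun p => A p.1 p.2)

/-- The rank-one state `|f(g)⟩⟩⟨⟨f(g)|`. -/
def rho {d : ℕ} (f : G → Matrix (Fin d) (Fin d) ℂ) (g : G) :
    Matrix (Fin d × Fin d) (Fin d × Fin d) ℂ :=
  fun p q => f g p.1 p.2 * star (f g q.1 q.2)

/-- `A g = f g ⊗ₖ 1`. -/
def Amat {d : ℕ} (f : G → Matrix (Fin d) (Fin d) ℂ) (g : G) :
    Matrix (Fin d × Fin d) (Fin d × Fin d) ℂ :=
  f g ⊗ₖ (1 : Matrix (Fin d) (Fin d) ℂ)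

/-- The average state `ρμ` (entrywise Bochner integral). -/
def rhoMu (μ : Measure G) {d : ℕ} (f : G → Matrix (Fin d) (Fin d) ℂ) :
    Matrix (Fin d × Fin d) (Fin d × Fin d) ℂ :=
  fun p q => ∫ g, rho f g p q ∂μ

/-- positivity, vanishing at ∅ and countable additivity (the "measure part" of a GPOVM). -/
def IsPreGPOVM {d : ℕ} (M : Set G → Matrix (Fin d × Fin d) (Fin d × Fin d) ℂ) : Prop :=
  (∀ B : Set G, MeasurableSet B → (M B).PosSemidef) ∧ M ∅ = 0 ∧
    ∀ B : ℕ → Set G, (∀ j, MeasurableSet (B j)) → Pairwise (Function.onFun Disjoint B) →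
      M (⋃ j, B j) = ∑' j, M (B j)

/-- Generalized POVM. -/
def IsGPOVM (μ : Measure G) {d : ℕ} (f : G → Matrix (Fin d) (Fin d) ℂ)
    (M : Set G → Matrix (Fin d × Fin d) (Fin d × Fin d) ℂ) : Prop :=
  IsPreGPOVM M ∧ (M Set.univ * rhoMu μ f).trace = 1

/-- Covariance of a GPOVM. -/
def IsCovariant {d : ℕ} (f : G → Matrix (Fin d) (Fin d) ℂ)
    (M : Set G → Matrix (Fin d × Fin d) (Fin d × Fin d) ℂ) : Prop :=
  ∀ (g : G) (B : Set G), MeasurableSet B →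
    M ((g * ·) '' B) = Amat f g * M B * (Amat f g)ᴴ

/-- The covariant GPOVM with seed `T`. -/
def MT (μ : Measure G) {d : ℕ} (f : G → Matrix (Fin d) (Fin d) ℂ)
    (T : Matrix (Fin d × Fin d) (Fin d × Fin d) ℂ) (B : Set G) :
    Matrix (Fin d × Fin d) (Fin d × Fin d) ℂ :=
  fun p q => ∫ g in B, (Amat f g * T * (Amat f g)ᴴ) p q ∂μ

/-- Pointwise risk. -/
def Dpt {d : ℕ} (w : G → G → ℝ)
    (ν : (Set G → Matrix (Fin d × Fin d) (Fin d × Fin d) ℂ) → G → Measure G)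
    (M : Set G → Matrix (Fin d × Fin d) (Fin d × Fin d) ℂ) (g : G) : ℝ :=
  ∫ gh, w g gh ∂(ν M g)

/-- Bayes risk. -/
def Dbayes (μ : Measure G) {d : ℕ} (w : G → G → ℝ)
    (ν : (Set G → Matrix (Fin d × Fin d) (Fin d × Fin d) ℂ) → G → Measure G)
    (M : Set G → Matrix (Fin d × Fin d) (Fin d × Fin d) ℂ) : ℝ :=
  ∫ g, Dpt w ν M g ∂μ

/-- Minimax risk. -/
def Dmax {d : ℕ} (w : G → G → ℝ)
    (ν : (Set G → Matrix (Fin d × Fin d) (Fin d × Fin d) ℂ) → G → Measure G)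
    (M : Set G → Matrix (Fin d × Fin d) (Fin d × Fin d) ℂ) : ℝ :=
  ⨆ g : G, Dpt w ν M g

/-- Twisted GPOVM `M_g`. -/
def twist {d : ℕ} (f : G → Matrix (Fin d) (Fin d) ℂ)
    (M : Set G → Matrix (Fin d × Fin d) (Fin d × Fin d) ℂ) (g : G) (B : Set G) :
    Matrix (Fin d × Fin d) (Fin d × Fin d) ℂ :=
  (Amat f g)ᴴ * M ((g * ·) '' B) * Amat f g

/-- Matrix of the orthogonal projection onto span {v g}. -/
def P0 {d : ℕ} (f : G → Matrix (Fin d) (Fin d) ℂ) :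
    Matrix (Fin d × Fin d) (Fin d × Fin d) ℂ :=
  Matrix.toEuclideanLin.symm
    ((Submodule.span ℂ (Set.range fun g => vec (f g))).subtype ∘ₗ
      (Submodule.orthogonalProjectionOnto (Submodule.span ℂ (Set.range fun g => vec (f g)))).toLinearMap)

open scoped ComplexInnerProductSpace in
/-- Key identity: matrix element of `ρμ` as an integral of products of inner products. -/
lemma inner_toEuclideanLin_rhoMu
    {G : Type} [Group G] [TopologicalSpace G] [IsTopologicalGroup G]
    [CompactSpace G] [T2Space G] [MeasurableSpace G] [BorelSpace G]
    (μ : Measure G) [IsFiniteMeasure μ]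
    {d : ℕ} (f : G → Matrix (Fin d) (Fin d) ℂ) (hf_cont : Continuous f)
    (x y : EuclideanSpace ℂ (Fin d × Fin d)) :
    ⟪y, Matrix.toEuclideanLin (rhoMu μ f) x⟫
      = ∫ g, ⟪y, vec (f g)⟫ * ⟪vec (f g), x⟫ ∂μ := by
  classical
  have hent : ∀ i j : Fin d, Continuous fun g : G => f g i j := fun i j =>
    (continuous_apply j).comp ((continuous_apply i).comp hf_cont)
  have hint : ∀ {h : G → ℂ}, Continuous h → Integrable h μ := fun hc =>
    hc.integrable_of_hasCompactSupport (HasCompactSupport.of_compactSpace _)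
  have hrho : ∀ p q : Fin d × Fin d, Continuous fun g : G => rho f g p q := by
    intro p q
    exact (hent p.1 p.2).mul (continuous_star.comp (hent q.1 q.2))
  have h1 : ⟪y, Matrix.toEuclideanLin (rhoMu μ f) x⟫
      = ∑ p : Fin d × Fin d, ∑ q : Fin d × Fin d,
          ∫ g, (starRingEnd ℂ) (y p) * rho f g p q * x q ∂μ := by
    rw [PiLp.inner_apply]
    simp only [Matrix.toEuclideanLin_apply, RCLike.inner_apply]
    congr 1
    ext p
    have : (rhoMu μ f *ᵥ x.ofLp) p
        = ∑ q : Fin d × Fin d, rhoMu μ f p q * x q := rfl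
    rw [this, Finset.sum_mul]
    congr 1
    ext q
    have h2 : rhoMu μ f p q * x q = ∫ g, rho f g p q * x q ∂μ := by
      rw [rhoMu, MeasureTheory.integral_mul_const]
    rw [h2, ← MeasureTheory.integral_mul_const]
    congr 1
    ext g
    ring
  rw [h1]
  have h3 : ∀ p : Fin d × Fin d,
      ∑ q : Fin d × Fin d, ∫ g, (starRingEnd ℂ) (y p) * rho f g p q * x q ∂μ
        = ∫ g, ∑ q : Fin d × Fin d, (starRingEnd ℂ) (y p) * rho f g p q * x q ∂μ := by
    intro p
    rw [MeasureTheory.integral_finset_sum]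
    intro q _
    exact hint ((((continuous_const.mul (hrho p q)).mul continuous_const)))
  simp only [h3]
  rw [← MeasureTheory.integral_finset_sum]
  · congr 1
    ext g
    rw [PiLp.inner_apply, PiLp.inner_apply, Finset.sum_mul_sum]
    congr 1
    ext p
    congr 1
    ext q
    simp only [RCLike.inner_apply, rho, vec, Complex.star_def]
    ring
  · intro p _
    apply MeasureTheory.integrable_finset_sum
    intro q _
    exact hint ((((continuous_const.mul (hrho p q)).mul continuous_const)))

/-- The support of the average state is the span of the vectors `v g`. -/
theorem range_rhoMu_eq_span
    {G : Type} [Group G] [TopologicalSpace G] [IsTopologicalGroup G]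
    [CompactSpace G] [T2Space G] [MeasurableSpace G] [BorelSpace G]
    (μ : Measure G) [μ.IsHaarMeasure] [IsProbabilityMeasure μ]
    {d : ℕ} (hd : 0 < d) (f : G → Matrix (Fin d) (Fin d) ℂ)
    (hf_cont : Continuous f) (hf_one : f 1 = 1)
    (hf_unitary : ∀ g : G, f g ∈ Matrix.unitaryGroup (Fin d) ℂ)
    (c : G → G → ℂ) (hc_norm : ∀ g h : G, ‖c g h‖ = 1)
    (hc_proj : ∀ g h : G, f (g * h) = c g h • (f g * f h))
    :
    LinearMap.range (Matrix.toEuclideanLin (rhoMu μ f)) =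
      Submodule.span ℂ (Set.range fun g : G => vec (f g)) := by
  classical
  open scoped ComplexInnerProductSpace in
  set v : G → EuclideanSpace ℂ (Fin d × Fin d) := fun g => vec (f g) with hv
  set T := Matrix.toEuclideanLin (rhoMu μ f) with hT
  have key : ∀ x y : EuclideanSpace ℂ (Fin d × Fin d),
      ⟪y, T x⟫ = ∫ g, ⟪y, v g⟫ * ⟪v g, x⟫ ∂μ := fun x y =>
    inner_toEuclideanLin_rhoMu μ f hf_cont x y
  have hvcont : Continuous v := by
    have : Continuous fun g : G => (fun p : Fin d × Fin d => f g p.1 p.2) := by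
      apply continuous_pi
      intro p
      exact (continuous_apply p.2).comp ((continuous_apply p.1).comp hf_cont)
    exact (PiLp.continuous_toLp 2 (fun _ : Fin d × Fin d => ℂ)).comp this
  apply le_antisymm
  · -- range ⊆ span
    rw [← Submodule.orthogonal_orthogonal (Submodule.span ℂ (Set.range v))]
    rintro _ ⟨x, rfl⟩
    rw [Submodule.mem_orthogonal]
    intro y hy
    have hzero : ∀ g : G, ⟪y, v g⟫ = 0 := by
      intro g
      exact (Submodule.mem_orthogonal' _ _).mp hy (v g)
        (Submodule.subset_span ⟨g, rfl⟩)
    rw [key]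
    simp [hzero]
  · -- span ⊆ range
    rw [Submodule.span_le]
    rintro _ ⟨g0, rfl⟩
    rw [SetLike.mem_coe, ← Submodule.orthogonal_orthogonal (LinearMap.range T),
      Submodule.mem_orthogonal]
    intro y hy
    -- `⟪y, T y⟫ = 0`
    have h0 : ⟪y, T y⟫ = 0 := by
      have := (Submodule.mem_orthogonal' _ _).mp hy (T y) ⟨y, rfl⟩
      exact this
    rw [key] at h0
    have hform : ∀ g : G, ⟪y, v g⟫ * ⟪v g, y⟫ = (Complex.normSq ⟪v g, y⟫ : ℂ) := by
      intro g
      rw [Complex.normSq_eq_conj_mul_self, inner_conj_symm]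
    rw [MeasureTheory.integral_congr_ae (Filter.Eventually.of_forall hform)] at h0
    have h0' : ∫ g, Complex.normSq ⟪v g, y⟫ ∂μ = 0 := by
      have hco : ∫ g, ((Complex.normSq ⟪v g, y⟫ : ℝ) : ℂ) ∂μ
          = ((∫ g, Complex.normSq ⟪v g, y⟫ ∂μ : ℝ) : ℂ) := integral_ofReal
      rw [hco] at h0
      exact_mod_cast h0
    have hcont : Continuous fun g : G => Complex.normSq ⟪v g, y⟫ :=
      Complex.continuous_normSq.comp (Continuous.inner hvcont continuous_const)
    have hintR : Integrable (fun g : G => Complex.normSq ⟪v g, y⟫) μ :=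
      hcont.integrable_of_hasCompactSupport (HasCompactSupport.of_compactSpace _)
    have hae : (fun g : G => Complex.normSq ⟪v g, y⟫) =ᵐ[μ] 0 :=
      (MeasureTheory.integral_eq_zero_iff_of_nonneg
        (fun g => Complex.normSq_nonneg _) hintR).mp h0'
    have hall : (fun g : G => Complex.normSq ⟪v g, y⟫) = 0 :=
      (hcont.ae_eq_iff_eq μ continuous_const).mp hae
    have : Complex.normSq ⟪v g0, y⟫ = 0 := congrFun hall g0
    have hvy : ⟪v g0, y⟫ = 0 := Complex.normSq_eq_zero.mp this
    rw [← inner_conj_symm (𝕜 := ℂ) y (v g0), hvy, map_zero]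

end GroupEstimation
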